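/- Fix γ ∈ (0,1/2], an integer n ≥ 1 and a real d with 1 < d ≤ n such that m′ = ⌊d/(log d)²⌋ ≥ 1, and let n′ = ⌊n/m′⌋. Let β denote the size of the largest γ-balanced P-independent set of G^{bip}_{n,d} and let β̄ = E[β]. Then for every t > 0, P[ |β − β̄| ≥ t ] ≤ 2·exp( −t² / (4·n′·(1+1/γ)²) ). In particular, whenever n′ ≤ n·(log d)²/d this gives P[ |β − β̄| ≥ t ] ≤ 2·exp( −t²·d / (4·(1+1/γ)²·(log d)²·n) ). -/

import Mathlib

open MeasureTheory Real Filter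

noncomputable section

/-- Bernoulli measure on `Bool` with success probability `p`. -/
def coin (p : ℝ) : Measure Bool :=
  ENNReal.ofReal p • Measure.dirac true + ENNReal.ofReal (1 - p) • Measure.dirac false

/-- The random bipartite graph `G^bip_{n,d}`, as a product (Bernoulli(d/n)) measure on
edge-indicator vectors indexed by the `n * n` possible edges. -/
def edgeMeasure (n : ℕ) (d : ℝ) : Measure (Fin (n * n) → Bool) :=
  Measure.pi fun _ => coin (d / n)

/-- Vertex set: the left class `L` is `Sum.inl`, the right class `R` is `Sum.inr`. -/
abbrev Vtx (n : ℕ) := Fin n ⊕ Fin n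

/-- Adjacency in the bipartite graph with edge-indicator vector `A`:
`i ∈ L` and `j ∈ R` are adjacent iff the indicator of the edge `(i,j)` is `true`. -/
def adjB (n : ℕ) (A : Fin (n * n) → Bool) : Vtx n → Vtx n → Prop
  | Sum.inl i, Sum.inr j => A (finProdFinEquiv (i, j)) = true
  | Sum.inr j, Sum.inl i => A (finProdFinEquiv (i, j)) = true
  | _, _ => False

/-- `S` is an independent set of the bipartite graph encoded by `A`. -/
def IsIndepSet (n : ℕ) (A : Fin (n * n) → Bool) (S : Set (Vtx n)) : Prop :=
  ∀ u ∈ S, ∀ v ∈ S, ¬ adjB n A u v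

/-- `S ∩ L`. -/
def leftPart {n : ℕ} (S : Set (Vtx n)) : Set (Vtx n) := S ∩ Set.range Sum.inl

/-- `S ∩ R`. -/
def rightPart {n : ℕ} (S : Set (Vtx n)) : Set (Vtx n) := S ∩ Set.range Sum.inr

/-- `S` is `γ`-balanced: `| |S ∩ L| - γ|S| | < 1`. -/
def IsBalanced (γ : ℝ) {n : ℕ} (S : Set (Vtx n)) : Prop :=
  |((leftPart S).ncard : ℝ) - γ * (S.ncard : ℝ)| < 1

/-- Block size `m′ = ⌊d/(log d)²⌋`. -/
def mblock (d : ℝ) : ℕ := ⌊d / (Real.log d) ^ 2⌋₊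

/-- The 0-based index of a vertex within its side of the bipartition. -/
def vidx {n : ℕ} : Vtx n → ℕ
  | Sum.inl i => (i : ℕ)
  | Sum.inr j => (j : ℕ)

/-- `S` is contained in the union of the `n′ = ⌊n/m′⌋` blocks of size `m′` on each side. -/
def InBlocks (n m' : ℕ) (S : Set (Vtx n)) : Prop :=
  ∀ v ∈ S, vidx v < (n / m') * m'

/-- `S` contains at most one vertex from each block (on each side): vertices `i, j` of the
same side lie in the same block iff `i / m′ = j / m′`. -/
def OnePerBlock (n m' : ℕ) (S : Set (Vtx n)) : Prop :=
  (∀ i j : Fin n, Sum.inl i ∈ S → Sum.inl j ∈ S → (i : ℕ) / m' = (j : ℕ) / m' → i = j) ∧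
  (∀ i j : Fin n, Sum.inr i ∈ S → Sum.inr j ∈ S → (i : ℕ) / m' = (j : ℕ) / m' → i = j)

/-- `S` is a `γ`-balanced `P`-independent set of the graph encoded by `A`. -/
def IsPBalIndep (γ : ℝ) (n m' : ℕ) (A : Fin (n * n) → Bool) (S : Set (Vtx n)) : Prop :=
  IsIndepSet n A S ∧ IsBalanced γ S ∧ InBlocks n m' S ∧ OnePerBlock n m' S

/-- `β(A)`: the size of the largest `γ`-balanced `P`-independent set of the graph `A`. -/
def betaFn (γ : ℝ) (n m' : ℕ) (A : Fin (n * n) → Bool) : ℕ :=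
  sSup {k | ∃ S : Set (Vtx n), IsPBalIndep γ n m' A S ∧ S.ncard = k}


/-- easy Hoeffding: mean-zero, |X| ≤ c ⟹ mgf ≤ exp(l²c²/2) -/
lemma hoeffding_easy {Ω : Type*} [MeasurableSpace Ω] [Finite Ω] [MeasurableSingletonClass Ω]
    (μ : Measure Ω) [IsProbabilityMeasure μ] (X : Ω → ℝ) (c l : ℝ)
    (hX0 : ∫ x, X x ∂μ = 0) (hXc : ∀ x, |X x| ≤ c) :
    ∫ x, exp (l * X x) ∂μ ≤ exp (l ^ 2 * c ^ 2 / 2) := by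
  have hne : Nonempty Ω := by
    by_contra h
    have : (Set.univ : Set Ω) = ∅ := by
      simp [Set.eq_empty_iff_forall_notMem]; intro x; exact h ⟨x⟩
    have h1 : μ Set.univ = 1 := measure_univ
    rw [this] at h1; simp at h1
  obtain ⟨x₀⟩ := hne
  have hc0 : 0 ≤ c := le_trans (abs_nonneg _) (hXc x₀)
  rcases eq_or_lt_of_le hc0 with hc | hc
  · have hX : ∀ x, X x = 0 := fun x => abs_nonpos_iff.mp (by rw [hc]; exact hXc x)
    simp only [hX, mul_zero, exp_zero]
    rw [integral_const]; simp
    positivity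
  · -- pointwise: exp (l * X x) ≤ cosh (l*c) + (X x / c) * sinh (l*c)
    have key : ∀ x, exp (l * X x) ≤ cosh (l * c) + (X x / c) * sinh (l * c) := by
      intro x
      have hxc := hXc x
      have ha : 0 ≤ (c - X x) / (2 * c) :=
        div_nonneg (by linarith [(abs_le.mp hxc).2]) (by linarith)
      have hb : 0 ≤ (c + X x) / (2 * c) :=
        div_nonneg (by linarith [(abs_le.mp hxc).1]) (by linarith)
      have hab : (c - X x) / (2 * c) + (c + X x) / (2 * c) = 1 := by
        field_simp; ring
      have := convexOn_exp.2 (Set.mem_univ (-(l * c))) (Set.mem_univ (l * c)) ha hb hab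
      simp only [smul_eq_mul] at this
      have harg : (c - X x) / (2 * c) * (-(l * c)) + (c + X x) / (2 * c) * (l * c)
          = l * X x := by
        rw [div_mul_eq_mul_div, div_mul_eq_mul_div, ← add_div,
          div_eq_iff (by positivity : (2:ℝ) * c ≠ 0)]
        ring
      rw [harg] at this
      refine this.trans (le_of_eq ?_)
      rw [Real.cosh_eq, Real.sinh_eq]
      field_simp
      ring
    calc ∫ x, exp (l * X x) ∂μ
        ≤ ∫ x, (cosh (l * c) + (X x / c) * sinh (l * c)) ∂μ := by
          apply integral_mono Integrable.of_finite Integrable.of_finite key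
      _ = cosh (l * c) := by
          rw [integral_add (by exact Integrable.of_finite) (by exact Integrable.of_finite)]
          rw [integral_const]
          simp only [measure_univ, probReal_univ, ENNReal.toReal_one, one_smul]
          have : ∫ x, (X x / c) * sinh (l * c) ∂μ
              = (∫ x, X x ∂μ) * (sinh (l * c) / c) := by
            rw [← integral_mul_const]
            congr 1; funext x; rw [div_mul_eq_mul_div, mul_div_assoc]
          rw [this, hX0]; ring
      _ ≤ exp (l ^ 2 * c ^ 2 / 2) := by
          have := Real.cosh_le_exp_half_sq (l * c)
          refine this.trans (le_of_eq ?_)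
          rw [mul_pow]

/-- McDiarmid mgf bound by induction on the number of groups. -/
lemma mcdiarmid_mgf : ∀ (N : ℕ) (ι : Type) [Fintype ι] (ν : Measure Bool)
    [IsProbabilityMeasure ν] (g : ι → Fin N) (f : (ι → Bool) → ℝ) (c : Fin N → ℝ)
    (_hc : ∀ k, 0 ≤ c k)
    (_hLip : ∀ (k : Fin N) (x y : ι → Bool), (∀ e, g e ≠ k → x e = y e) → |f x - f y| ≤ c k)
    (l : ℝ),
    ∫ x, exp (l * (f x - ∫ x', f x' ∂(Measure.pi fun _ : ι => ν))) ∂(Measure.pi fun _ : ι => ν)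
      ≤ exp (l ^ 2 * (∑ k, (c k) ^ 2) / 2) := by
  intro N
  induction N with
  | zero =>
    intro ι _ ν _ g f c hc hLip l
    have : IsEmpty ι := ⟨fun e => (g e).elim0⟩
    have hsub : Subsingleton (ι → Bool) := ⟨fun a b => funext fun e => (this.false e).elim⟩
    have hconst : ∀ x : ι → Bool, f x = f (fun _ => true) := fun x => by
      congr 1; exact Subsingleton.elim _ _
    have h1 : ∫ x', f x' ∂(Measure.pi fun _ : ι => ν) = f (fun _ => true) := by
      rw [integral_congr_ae (ae_of_all _ hconst), integral_const]; simp
    calc ∫ x, exp (l * (f x - ∫ x', f x' ∂(Measure.pi fun _ : ι => ν)))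
            ∂(Measure.pi fun _ : ι => ν)
        = ∫ _x, (1:ℝ) ∂(Measure.pi fun _ : ι => ν) := by
          apply integral_congr_ae (ae_of_all _ _)
          intro x; rw [hconst x, h1]; simp
      _ = 1 := by rw [integral_const]; simp
      _ ≤ _ := by rw [Finset.univ_eq_empty]; simp
  | succ N IH =>
    intro ι _ ν _ g f c hc hLip l
    classical
    set p : ι → Prop := fun e => g e = Fin.last N with hp
    set μ := (Measure.pi fun _ : ι => ν) with hμ
    set μ₁ := (Measure.pi fun _ : Subtype p => ν) with hμ₁
    set μ₂ := (Measure.pi fun _ : {e // ¬ p e} => ν) with hμ₂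
    set E := MeasurableEquiv.piEquivPiSubtypeProd (fun _ : ι => Bool) p with hE
    have MP : MeasurePreserving E μ (μ₁.prod μ₂) :=
      measurePreserving_piEquivPiSubtypeProd (fun _ : ι => ν) p
    -- transfer of integrals
    have transfer : ∀ φ : (ι → Bool) → ℝ, ∫ x, φ x ∂μ = ∫ z, φ (E.symm z) ∂(μ₁.prod μ₂) := by
      intro φ
      rw [← MP.map_eq, integral_map_equiv]
      congr 1; ext x; rw [MeasurableEquiv.symm_apply_apply]
    have hsymm : ∀ (x1 : Subtype p → Bool) (y : {e // ¬ p e} → Bool) (e : ι),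
        E.symm (x1, y) e = if h : p e then x1 ⟨e, h⟩ else y ⟨e, h⟩ := by
      intro x1 y e; rfl
    set F : ({e // ¬ p e} → Bool) → ℝ := fun y => ∫ x1, f (E.symm (x1, y)) ∂μ₁ with hF
    set m := ∫ x, f x ∂μ with hm
    have hmean : m = ∫ y, F y ∂μ₂ := by
      rw [hm, transfer f, integral_prod_symm _ Integrable.of_finite]
    have habs : ∀ (y : {e // ¬ p e} → Bool) (x1 x1' : Subtype p → Bool),
        |f (E.symm (x1, y)) - f (E.symm (x1', y))| ≤ c (Fin.last N) := by
      intro y x1 x1'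
      apply hLip
      intro e he
      have hpe : ¬ p e := he
      rw [hsymm, hsymm, dif_neg hpe, dif_neg hpe]
    have hXc : ∀ (y : {e // ¬ p e} → Bool) (x1 : Subtype p → Bool),
        |f (E.symm (x1, y)) - F y| ≤ c (Fin.last N) := by
      intro y x1
      have h1 : f (E.symm (x1, y)) - F y
          = ∫ x1', (f (E.symm (x1, y)) - f (E.symm (x1', y))) ∂μ₁ := by
        rw [integral_sub Integrable.of_finite Integrable.of_finite, integral_const]
        simp [hF]
      rw [h1]
      have h2 := norm_integral_le_of_norm_le_const
        (μ := μ₁) (C := c (Fin.last N))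
        (f := fun x1' => f (E.symm (x1, y)) - f (E.symm (x1', y)))
        (ae_of_all _ fun x1' => by rw [Real.norm_eq_abs]; exact habs y x1 x1')
      rw [Real.norm_eq_abs] at h2
      simpa using h2
    have hXmean : ∀ y : {e // ¬ p e} → Bool,
        ∫ x1, (f (E.symm (x1, y)) - F y) ∂μ₁ = 0 := by
      intro y
      rw [integral_sub Integrable.of_finite Integrable.of_finite, integral_const]
      simp [hF]
    have hinner : ∀ y : {e // ¬ p e} → Bool,
        ∫ x1, exp (l * (f (E.symm (x1, y)) - F y)) ∂μ₁
          ≤ exp (l ^ 2 * (c (Fin.last N)) ^ 2 / 2) :=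
      fun y => hoeffding_easy μ₁ _ (c (Fin.last N)) l (hXmean y) (hXc y)
    set g2 : {e // ¬ p e} → Fin N := fun e => Fin.castPred (g e.1) e.2 with hg2
    have hLip2 : ∀ (k : Fin N) (y y' : {e // ¬ p e} → Bool),
        (∀ e, g2 e ≠ k → y e = y' e) → |F y - F y'| ≤ c k.castSucc := by
      intro k y y' hagree
      have h1 : F y - F y' = ∫ x1, (f (E.symm (x1, y)) - f (E.symm (x1, y'))) ∂μ₁ := by
        rw [integral_sub Integrable.of_finite Integrable.of_finite]
      rw [h1]
      have h2 := norm_integral_le_of_norm_le_const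
        (μ := μ₁) (C := c k.castSucc)
        (f := fun x1 => f (E.symm (x1, y)) - f (E.symm (x1, y')))
        (ae_of_all _ fun x1 => by
          rw [Real.norm_eq_abs]
          apply hLip
          intro e he
          rw [hsymm, hsymm]
          by_cases hpe : p e
          · rw [dif_pos hpe, dif_pos hpe]
          · rw [dif_neg hpe, dif_neg hpe]
            apply hagree ⟨e, hpe⟩
            intro hk
            apply he
            rw [← Fin.castSucc_castPred (g e) hpe]
            rw [hg2] at hk
            simp only at hk
            rw [hk])
      rw [Real.norm_eq_abs] at h2
      simpa using h2
    have main : ∫ x, exp (l * (f x - m)) ∂μ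
        = ∫ y, (exp (l * (F y - m)) * ∫ x1, exp (l * (f (E.symm (x1, y)) - F y)) ∂μ₁) ∂μ₂ := by
      rw [transfer (fun x => exp (l * (f x - m))), integral_prod_symm _ Integrable.of_finite]
      apply integral_congr_ae (ae_of_all _ _)
      intro y
      rw [← integral_const_mul]
      apply integral_congr_ae (ae_of_all _ _)
      intro x1
      rw [← Real.exp_add]
      congr 1
      ring
    have IH2 := IH {e // ¬ p e} ν g2 F (fun k => c k.castSucc)
      (fun k => hc k.castSucc) hLip2 l
    rw [← hmean] at IH2
    calc ∫ x, exp (l * (f x - m)) ∂μ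
        = ∫ y, (exp (l * (F y - m)) * ∫ x1, exp (l * (f (E.symm (x1, y)) - F y)) ∂μ₁) ∂μ₂ :=
          main
      _ ≤ ∫ y, exp (l * (F y - m)) * exp (l ^ 2 * (c (Fin.last N)) ^ 2 / 2) ∂μ₂ := by
          apply integral_mono Integrable.of_finite Integrable.of_finite
          intro y
          exact mul_le_mul_of_nonneg_left (hinner y) (exp_nonneg _)
      _ = (∫ y, exp (l * (F y - m)) ∂μ₂) * exp (l ^ 2 * (c (Fin.last N)) ^ 2 / 2) := by
          rw [integral_mul_const]
      _ ≤ exp (l ^ 2 * (∑ k : Fin N, (c k.castSucc) ^ 2) / 2)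
            * exp (l ^ 2 * (c (Fin.last N)) ^ 2 / 2) := by
          exact mul_le_mul_of_nonneg_right IH2 (exp_nonneg _)
      _ = exp (l ^ 2 * (∑ k : Fin (N + 1), (c k) ^ 2) / 2) := by
          rw [← Real.exp_add, Fin.sum_univ_castSucc]
          congr 1
          ring

lemma mcdiarmid_tail_one (ι : Type) [Fintype ι] (ν : Measure Bool) [IsProbabilityMeasure ν]
    (N : ℕ) (g : ι → Fin N) (f : (ι → Bool) → ℝ) (c : ℝ) (hc : 0 < c) (hN : 0 < N)
    (hLip : ∀ (k : Fin N) (x y : ι → Bool), (∀ e, g e ≠ k → x e = y e) → |f x - f y| ≤ c)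
    (t : ℝ) (ht : 0 < t) :
    (Measure.pi fun _ : ι => ν) {x | t ≤ f x - ∫ x', f x' ∂(Measure.pi fun _ : ι => ν)}
      ≤ ENNReal.ofReal (exp (-t ^ 2 / (2 * (N * c ^ 2)))) := by
  set μ := (Measure.pi fun _ : ι => ν) with hμ
  set m := ∫ x', f x' ∂μ with hm
  set V : ℝ := N * c ^ 2 with hV
  have hV0 : 0 < V := by
    apply mul_pos _ (by positivity)
    exact_mod_cast hN
  set l : ℝ := t / V with hl
  have hl0 : 0 < l := div_pos ht hV0
  have mgf := mcdiarmid_mgf N ι ν g f (fun _ => c) (fun _ => le_of_lt hc) hLip l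
  have hsum : (∑ _k : Fin N, c ^ 2) = V := by
    rw [Finset.sum_const]
    simp [hV]
  rw [hsum] at mgf
  have hmeas : ∀ φ : (ι → Bool) → ℝ, Measurable φ := fun φ => measurable_of_countable φ
  calc μ {x | t ≤ f x - m}
      ≤ ∫⁻ x, ENNReal.ofReal (exp (l * (f x - m - t))) ∂μ := by
        have h1 : μ {x | t ≤ f x - m} = ∫⁻ x in {x | t ≤ f x - m}, 1 ∂μ := by
          rw [setLIntegral_one]
        rw [h1]
        refine le_trans (setLIntegral_mono (by measurability) ?_) (setLIntegral_le_lintegral _ _)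
        intro x hx
        rw [show (1 : ENNReal) = ENNReal.ofReal 1 by simp]
        apply ENNReal.ofReal_le_ofReal
        rw [← Real.exp_zero]
        apply Real.exp_le_exp.2
        have : (0:ℝ) ≤ f x - m - t := by
          have := hx
          simp only [Set.mem_setOf_eq] at this
          linarith
        positivity
    _ = ENNReal.ofReal (∫ x, exp (l * (f x - m - t)) ∂μ) := by
        rw [ofReal_integral_eq_lintegral_ofReal Integrable.of_finite
          (ae_of_all _ fun x => exp_nonneg _)]
    _ ≤ ENNReal.ofReal (exp (-t ^ 2 / (2 * V))) := by
        apply ENNReal.ofReal_le_ofReal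
        have h2 : ∀ x, exp (l * (f x - m - t)) = exp (-(l * t)) * exp (l * (f x - m)) := by
          intro x
          rw [← Real.exp_add]
          congr 1
          ring
        calc ∫ x, exp (l * (f x - m - t)) ∂μ
            = exp (-(l * t)) * ∫ x, exp (l * (f x - m)) ∂μ := by
              rw [← integral_const_mul]
              exact integral_congr_ae (ae_of_all _ h2)
          _ ≤ exp (-(l * t)) * exp (l ^ 2 * V / 2) :=
              mul_le_mul_of_nonneg_left mgf (exp_nonneg _)
          _ = exp (-t ^ 2 / (2 * V)) := by
              rw [← Real.exp_add]
              congr 1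
              rw [hl]
              field_simp
              ring

lemma mcdiarmid_tail_two (ι : Type) [Fintype ι] (ν : Measure Bool) [IsProbabilityMeasure ν]
    (N : ℕ) (g : ι → Fin N) (f : (ι → Bool) → ℝ) (c : ℝ) (hc : 0 < c) (hN : 0 < N)
    (hLip : ∀ (k : Fin N) (x y : ι → Bool), (∀ e, g e ≠ k → x e = y e) → |f x - f y| ≤ c)
    (t : ℝ) (ht : 0 < t) :
    (Measure.pi fun _ : ι => ν) {x | t ≤ |f x - ∫ x', f x' ∂(Measure.pi fun _ : ι => ν)|}
      ≤ ENNReal.ofReal (2 * exp (-t ^ 2 / (2 * (N * c ^ 2)))) := by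
  set μ := (Measure.pi fun _ : ι => ν) with hμ
  set m := ∫ x', f x' ∂μ with hm
  have hsub : {x | t ≤ |f x - m|} ⊆ {x | t ≤ f x - m} ∪ {x | t ≤ m - f x} := by
    intro x hx
    simp only [Set.mem_setOf_eq, Set.mem_union] at *
    rcases le_abs.mp hx with h | h
    · exact Or.inl h
    · exact Or.inr (by linarith [h])
  have h1 := mcdiarmid_tail_one ι ν N g f c hc hN hLip t ht
  have hLipneg : ∀ (k : Fin N) (x y : ι → Bool), (∀ e, g e ≠ k → x e = y e) →
      |(fun x => -f x) x - (fun x => -f x) y| ≤ c := by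
    intro k x y hxy
    simp only
    rw [show -f x - -f y = -(f x - f y) by ring, abs_neg]
    exact hLip k x y hxy
  have h2 := mcdiarmid_tail_one ι ν N g (fun x => -f x) c hc hN hLipneg t ht
  have hneg : ∫ x', (fun x => -f x) x' ∂μ = -m := by
    simp only
    rw [integral_neg, hm]
  rw [hneg] at h2
  have h2' : μ {x | t ≤ m - f x} ≤ ENNReal.ofReal (exp (-t ^ 2 / (2 * (N * c ^ 2)))) := by
    refine le_trans (le_of_eq ?_) h2
    congr 1
    ext x
    simp only [Set.mem_setOf_eq]
    constructor <;> intro <;> linarith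
  calc μ {x | t ≤ |f x - m|}
      ≤ μ ({x | t ≤ f x - m} ∪ {x | t ≤ m - f x}) := measure_mono hsub
    _ ≤ μ {x | t ≤ f x - m} + μ {x | t ≤ m - f x} := measure_union_le _ _
    _ ≤ ENNReal.ofReal (exp (-t ^ 2 / (2 * (N * c ^ 2))))
        + ENNReal.ofReal (exp (-t ^ 2 / (2 * (N * c ^ 2)))) := add_le_add h1 h2'
    _ = ENNReal.ofReal (2 * exp (-t ^ 2 / (2 * (N * c ^ 2)))) := by
        rw [← ENNReal.ofReal_add (exp_nonneg _) (exp_nonneg _)]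
        congr 1
        ring

/-- numeric rebalancing lemma -/
lemma rebal (γ : ℝ) (hγ0 : 0 < γ) (hγ1 : γ ≤ 1 / 2) (L1 R1 : ℕ)
    (h1 : γ - 2 < (L1 : ℝ) - γ * ((L1 : ℝ) + R1)) (h2 : (L1 : ℝ) - γ * ((L1 : ℝ) + R1) < 1 + γ) :
    ∃ L2 R2 : ℕ, L2 ≤ L1 ∧ R2 ≤ R1 ∧ |(L2 : ℝ) - γ * ((L2 : ℝ) + R2)| < 1 ∧
      ((L1 : ℝ) + R1) - ((L2 : ℝ) + R2) ≤ 1 / γ := by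
  have hγinv : 2 ≤ 1 / γ := by
    rw [le_div_iff₀ hγ0]; linarith
  set f1 : ℝ := (L1 : ℝ) - γ * ((L1 : ℝ) + R1) with hf1
  rcases lt_or_ge f1 1 with hlt | hge
  · rcases lt_or_ge (-1) f1 with hgt | hle
    · -- already balanced
      exact ⟨L1, R1, le_refl _, le_refl _, abs_lt.mpr ⟨by linarith, hlt⟩, by linarith⟩
    · -- f1 ≤ -1 : too many right vertices; remove k of them
      have hP : -1 < f1 + (R1 : ℝ) * γ := by
        have : f1 + (R1 : ℝ) * γ = (L1 : ℝ) * (1 - γ) := by rw [hf1]; ring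
        rw [this]
        have : (0:ℝ) ≤ (L1 : ℝ) * (1 - γ) := by
          apply mul_nonneg (Nat.cast_nonneg _); linarith
        linarith
      classical
      have hex : ∃ j : ℕ, -1 < f1 + (j : ℝ) * γ := ⟨R1, hP⟩
      set k := Nat.find hex with hk
      have hkspec : -1 < f1 + (k : ℝ) * γ := Nat.find_spec hex
      have hkR : k ≤ R1 := Nat.find_le hP
      have hk1 : 1 ≤ k := by
        rcases Nat.eq_zero_or_pos k with h0 | h; swap; · exact h
        exfalso; rw [h0] at hkspec; push_cast at hkspec; linarith
      have hkpred : ¬ (-1 < f1 + ((k - 1 : ℕ) : ℝ) * γ) := Nat.find_min hex (by omega)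
      push_neg at hkpred
      have hcast : ((k - 1 : ℕ) : ℝ) = (k : ℝ) - 1 := by
        have : (1:ℕ) ≤ k := hk1
        push_cast [this]; ring
      rw [hcast] at hkpred
      refine ⟨L1, R1 - k, le_refl _, Nat.sub_le _ _, ?_, ?_⟩
      · have hres : ((R1 - k : ℕ) : ℝ) = (R1 : ℝ) - k := by push_cast [hkR]; ring
        rw [hres]
        have heq : (L1 : ℝ) - γ * ((L1 : ℝ) + ((R1 : ℝ) - k)) = f1 + (k : ℝ) * γ := by
          rw [hf1]; ring
        rw [heq]
        apply abs_lt.mpr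
        constructor
        · exact hkspec
        · nlinarith [hγ0.le]
      · have hres : ((R1 - k : ℕ) : ℝ) = (R1 : ℝ) - k := by push_cast [hkR]; ring
        rw [hres]
        have hkbound : (k : ℝ) ≤ 1 / γ := by
          have h3 : ((k : ℝ) - 1) * γ ≤ -1 - f1 := by linarith
          have h4 : -1 - f1 < 1 - γ := by linarith
          have h5 : ((k : ℝ) - 1) * γ < 1 - γ := lt_of_le_of_lt h3 h4
          rw [le_div_iff₀ hγ0]
          nlinarith
        linarith
  · -- f1 ≥ 1 : too many left vertices; remove one
    have hL1 : 1 ≤ L1 := by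
      rcases Nat.eq_zero_or_pos L1 with h0 | h; swap; · exact h
      exfalso
      have hc : (L1 : ℝ) = 0 := by rw [h0]; simp
      rw [hf1, hc] at hge
      nlinarith [Nat.cast_nonneg (α := ℝ) R1, hγ0.le]
    refine ⟨L1 - 1, R1, Nat.sub_le _ _, le_refl _, ?_, ?_⟩
    · have hres : ((L1 - 1 : ℕ) : ℝ) = (L1 : ℝ) - 1 := by push_cast [hL1]; ring
      rw [hres]
      have heq : (L1 : ℝ) - 1 - γ * (((L1 : ℝ) - 1) + R1) = f1 - (1 - γ) := by
        rw [hf1]; ring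
      rw [heq]
      apply abs_lt.mpr
      constructor <;> [linarith; linarith]
    · have hres : ((L1 - 1 : ℕ) : ℝ) = (L1 : ℝ) - 1 := by push_cast [hL1]; ring
      rw [hres]; linarith

lemma ncard_split {n : ℕ} (T : Set (Vtx n)) :
    T.ncard = (leftPart T).ncard + (rightPart T).ncard := by
  have hunion : leftPart T ∪ rightPart T = T := by
    rw [leftPart, rightPart, ← Set.inter_union_distrib_left]
    have : (Set.range (Sum.inl : Fin n → Vtx n)) ∪ Set.range Sum.inr = Set.univ := by
      ext v; cases v <;> simp
    rw [this, Set.inter_univ]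
  have hdisj : Disjoint (leftPart T) (rightPart T) := by
    apply Set.disjoint_left.mpr
    rintro v ⟨-, i, rfl⟩ ⟨-, j, hj⟩
    exact Sum.inl_ne_inr hj.symm
  conv_lhs => rw [← hunion]
  rw [Set.ncard_union_eq hdisj (Set.toFinite _) (Set.toFinite _)]

lemma empty_isPBalIndep (γ : ℝ) (n m' : ℕ) (A : Fin (n * n) → Bool) :
    IsPBalIndep γ n m' A ∅ := by
  refine ⟨fun u hu => hu.elim, ?_, fun v hv => hv.elim,
    fun i j hi => hi.elim, fun i j hi => hi.elim⟩
  unfold IsBalanced leftPart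
  simp

lemma betaFn_bddAbove (γ : ℝ) (n m' : ℕ) (A : Fin (n * n) → Bool) :
    BddAbove {k | ∃ S : Set (Vtx n), IsPBalIndep γ n m' A S ∧ S.ncard = k} := by
  refine ⟨Nat.card (Vtx n), fun k hk => ?_⟩
  obtain ⟨S, -, rfl⟩ := hk
  rw [← Set.ncard_univ]
  exact Set.ncard_le_ncard (Set.subset_univ S) (Set.toFinite _)

lemma exists_betaFn_max (γ : ℝ) (n m' : ℕ) (A : Fin (n * n) → Bool) :
    ∃ S : Set (Vtx n), IsPBalIndep γ n m' A S ∧ S.ncard = betaFn γ n m' A := by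
  have hne : {k | ∃ S : Set (Vtx n), IsPBalIndep γ n m' A S ∧ S.ncard = k}.Nonempty :=
    ⟨0, ∅, empty_isPBalIndep γ n m' A, by simp⟩
  exact Nat.sSup_mem hne (betaFn_bddAbove γ n m' A)

lemma le_betaFn (γ : ℝ) (n m' : ℕ) (A : Fin (n * n) → Bool) (S : Set (Vtx n))
    (h : IsPBalIndep γ n m' A S) : S.ncard ≤ betaFn γ n m' A :=
  le_csSup (betaFn_bddAbove γ n m' A) ⟨S, h, rfl⟩

lemma isIndepSet_mono {n : ℕ} {A : Fin (n * n) → Bool} {S S' : Set (Vtx n)}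
    (hsub : S' ⊆ S) (h : IsIndepSet n A S) : IsIndepSet n A S' :=
  fun u hu v hv => h u (hsub hu) v (hsub hv)

lemma inBlocks_mono {n m' : ℕ} {S S' : Set (Vtx n)} (hsub : S' ⊆ S)
    (h : InBlocks n m' S) : InBlocks n m' S' := fun v hv => h v (hsub hv)

lemma onePerBlock_mono {n m' : ℕ} {S S' : Set (Vtx n)} (hsub : S' ⊆ S)
    (h : OnePerBlock n m' S) : OnePerBlock n m' S' :=
  ⟨fun i j hi hj => h.1 i j (hsub hi) (hsub hj), fun i j hi hj => h.2 i j (hsub hi) (hsub hj)⟩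

/-- group index (as a natural number) of an edge -/
def egroupN (n m' : ℕ) (e : Fin (n * n)) : ℕ :=
  min (min ((finProdFinEquiv.symm e).1.val / m') ((finProdFinEquiv.symm e).2.val / m'))
    (n / m' - 1)

/-- key Lipschitz estimate: changing the edges of one group changes β by at most 2 + 1/γ -/
lemma beta_diff (γ : ℝ) (hγ0 : 0 < γ) (hγ1 : γ ≤ 1 / 2) (n m' : ℕ) (hm' : 1 ≤ m')
    (k : ℕ) (x y : Fin (n * n) → Bool)
    (hxy : ∀ e : Fin (n * n), egroupN n m' e ≠ k → x e = y e) :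
    (betaFn γ n m' x : ℝ) ≤ (betaFn γ n m' y : ℝ) + (2 + 1 / γ) := by
  obtain ⟨S, hS, hcard⟩ := exists_betaFn_max γ n m' x
  set n' := n / m' with hn'
  -- remove the (at most two) vertices of block k
  set S1 : Set (Vtx n) := {v | v ∈ S ∧ vidx v / m' ≠ k} with hS1
  have hS1sub : S1 ⊆ S := fun v hv => hv.1
  -- division bound for vertices in blocks
  have hdivlt : ∀ v ∈ S, vidx v / m' ≤ n' - 1 := by
    intro v hv
    have h1 : vidx v < n' * m' := hS.2.2.1 v hv
    have h1' : vidx v < m' * n' := by rw [mul_comm]; exact h1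
    have h2 : vidx v / m' < n' := Nat.div_lt_of_lt_mul h1'
    omega
  -- S1 is independent in y
  have hindep1 : IsIndepSet n y S1 := by
    intro u hu v hv hadj
    have key : ∀ (i j : Fin n), Sum.inl i ∈ S1 → Sum.inr j ∈ S1 →
        y (finProdFinEquiv (i, j)) = true → False := by
      intro i j hi hj hyt
      set e := finProdFinEquiv (i, j) with he
      by_cases hxe : x e = y e
      · have : adjB n x (Sum.inl i) (Sum.inr j) := by
          show x e = true
          rw [hxe]; exact hyt
        exact hS.1 _ hi.1 _ hj.1 this
      · have hge : egroupN n m' e = k := by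
          by_contra h; exact hxe (hxy e h)
        have hsymm : finProdFinEquiv.symm e = (i, j) := Equiv.symm_apply_apply _ _
        have h1 := hdivlt _ hi.1
        have h2 := hdivlt _ hj.1
        simp only [vidx] at h1 h2
        have hgi : egroupN n m' e = min ((i : ℕ) / m') ((j : ℕ) / m') := by
          unfold egroupN
          rw [hsymm]
          show min (min ((i : ℕ) / m') ((j : ℕ) / m')) (n / m' - 1) = _
          omega
        rw [hgi] at hge
        have : (i : ℕ) / m' = k ∨ (j : ℕ) / m' = k := by omega
        rcases this with h | h
        · exact hi.2 (by simpa [vidx] using h)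
        · exact hj.2 (by simpa [vidx] using h)
    cases u with
    | inl i =>
      cases v with
      | inl i' => exact hadj
      | inr j => exact key i j hu hv hadj
    | inr j =>
      cases v with
      | inl i => exact key i j hv hu hadj
      | inr j' => exact hadj
  -- counting
  set L := (leftPart S).ncard with hL
  set R := (rightPart S).ncard with hR
  set L1 := (leftPart S1).ncard with hL1
  set R1 := (rightPart S1).ncard with hR1
  have hLsub : leftPart S1 ⊆ leftPart S := Set.inter_subset_inter_left _ hS1sub
  have hRsub : rightPart S1 ⊆ rightPart S := Set.inter_subset_inter_left _ hS1sub
  have hL1L : L1 ≤ L := Set.ncard_le_ncard hLsub (Set.toFinite _)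
  have hR1R : R1 ≤ R := Set.ncard_le_ncard hRsub (Set.toFinite _)
  have hLL1 : L ≤ L1 + 1 := by
    have hsub2 : leftPart S ⊆ leftPart S1 ∪ leftPart (S \ S1) := by
      rintro v ⟨hvS, i, rfl⟩
      by_cases h : Sum.inl i ∈ S1
      · exact Or.inl ⟨h, i, rfl⟩
      · exact Or.inr ⟨⟨hvS, h⟩, i, rfl⟩
    have hone : (leftPart (S \ S1)).ncard ≤ 1 := by
      rw [Set.ncard_le_one_iff (Set.toFinite _)]
      rintro a b ⟨⟨haS, haN⟩, i, rfl⟩ ⟨⟨hbS, hbN⟩, j, rfl⟩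
      have hik : (i : ℕ) / m' = k := by
        by_contra h; exact haN ⟨haS, by simpa [vidx] using h⟩
      have hjk : (j : ℕ) / m' = k := by
        by_contra h; exact hbN ⟨hbS, by simpa [vidx] using h⟩
      have := hS.2.2.2.1 i j haS hbS (by omega)
      rw [this]
    calc L ≤ (leftPart S1 ∪ leftPart (S \ S1)).ncard :=
          Set.ncard_le_ncard hsub2 (Set.toFinite _)
      _ ≤ L1 + (leftPart (S \ S1)).ncard := Set.ncard_union_le _ _
      _ ≤ L1 + 1 := by omega
  have hRR1 : R ≤ R1 + 1 := by
    have hsub2 : rightPart S ⊆ rightPart S1 ∪ rightPart (S \ S1) := by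
      rintro v ⟨hvS, i, rfl⟩
      by_cases h : Sum.inr i ∈ S1
      · exact Or.inl ⟨h, i, rfl⟩
      · exact Or.inr ⟨⟨hvS, h⟩, i, rfl⟩
    have hone : (rightPart (S \ S1)).ncard ≤ 1 := by
      rw [Set.ncard_le_one_iff (Set.toFinite _)]
      rintro a b ⟨⟨haS, haN⟩, i, rfl⟩ ⟨⟨hbS, hbN⟩, j, rfl⟩
      have hik : (i : ℕ) / m' = k := by
        by_contra h; exact haN ⟨haS, by simpa [vidx] using h⟩
      have hjk : (j : ℕ) / m' = k := by
        by_contra h; exact hbN ⟨hbS, by simpa [vidx] using h⟩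
      have := hS.2.2.2.2 i j haS hbS (by omega)
      rw [this]
    calc R ≤ (rightPart S1 ∪ rightPart (S \ S1)).ncard :=
          Set.ncard_le_ncard hsub2 (Set.toFinite _)
      _ ≤ R1 + (rightPart (S \ S1)).ncard := Set.ncard_union_le _ _
      _ ≤ R1 + 1 := by omega
  -- balance of S
  have hbalS : |(L : ℝ) - γ * ((L : ℝ) + R)| < 1 := by
    have := hS.2.1
    unfold IsBalanced at this
    rwa [ncard_split S, ← hL, ← hR, Nat.cast_add] at this
  rw [abs_lt] at hbalS
  -- rebalance
  have hreb := rebal γ hγ0 hγ1 L1 R1 ?_ ?_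
  rotate_left
  · have ha1 : (L : ℝ) - L1 ≤ 1 := by
      have : (L : ℝ) ≤ (L1 : ℝ) + 1 := by exact_mod_cast hLL1
      linarith
    have ha0 : (0:ℝ) ≤ (L : ℝ) - L1 := by
      have : (L1 : ℝ) ≤ L := by exact_mod_cast hL1L
      linarith
    have hb0 : (0:ℝ) ≤ (R : ℝ) - R1 := by
      have : (R1 : ℝ) ≤ R := by exact_mod_cast hR1R
      linarith
    nlinarith [hbalS.1, mul_nonneg hγ0.le ha0, mul_nonneg hγ0.le hb0,
      mul_le_of_le_one_right hγ0.le ha1]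
  · have ha0 : (0:ℝ) ≤ (L : ℝ) - L1 := by
      have : (L1 : ℝ) ≤ L := by exact_mod_cast hL1L
      linarith
    have hb1 : (R : ℝ) - R1 ≤ 1 := by
      have : (R : ℝ) ≤ (R1 : ℝ) + 1 := by exact_mod_cast hRR1
      linarith
    have hb0 : (0:ℝ) ≤ (R : ℝ) - R1 := by
      have : (R1 : ℝ) ≤ R := by exact_mod_cast hR1R
      linarith
    nlinarith [hbalS.2, mul_nonneg hγ0.le ha0, mul_nonneg hγ0.le hb0,
      mul_le_of_le_one_right hγ0.le hb1]
  obtain ⟨L2, R2, hL2, hR2, hbal2, hloss⟩ := hreb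
  -- choose subsets
  obtain ⟨TL, hTLsub, hTLcard⟩ :=
    Set.exists_subset_card_eq (show L2 ≤ (leftPart S1).ncard from hL2)
  obtain ⟨TR, hTRsub, hTRcard⟩ :=
    Set.exists_subset_card_eq (show R2 ≤ (rightPart S1).ncard from hR2)
  set S2 : Set (Vtx n) := TL ∪ TR with hS2
  have hTLinl : TL ⊆ Set.range Sum.inl := hTLsub.trans (Set.inter_subset_right)
  have hTRinr : TR ⊆ Set.range Sum.inr := hTRsub.trans (Set.inter_subset_right)
  have hTLS1 : TL ⊆ S1 := hTLsub.trans (Set.inter_subset_left)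
  have hTRS1 : TR ⊆ S1 := hTRsub.trans (Set.inter_subset_left)
  have hS2S1 : S2 ⊆ S1 := Set.union_subset hTLS1 hTRS1
  have hdisjranges : Disjoint (Set.range (Sum.inl : Fin n → Vtx n)) (Set.range Sum.inr) := by
    rw [Set.disjoint_left]
    rintro v ⟨i, rfl⟩ ⟨j, hj⟩
    exact Sum.inl_ne_inr hj.symm
  have hleftS2 : leftPart S2 = TL := by
    rw [hS2, leftPart, Set.union_inter_distrib_right]
    rw [Set.inter_eq_self_of_subset_left hTLinl]
    have : TR ∩ Set.range Sum.inl = ∅ := by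
      apply Set.eq_empty_of_subset_empty
      intro v ⟨hv1, hv2⟩
      exact ((hdisjranges.symm).le_bot ⟨hTRinr hv1, hv2⟩).elim
    rw [this, Set.union_empty]
  have hrightS2 : rightPart S2 = TR := by
    rw [hS2, rightPart, Set.union_inter_distrib_right]
    rw [Set.inter_eq_self_of_subset_left hTRinr]
    have : TL ∩ Set.range Sum.inr = ∅ := by
      apply Set.eq_empty_of_subset_empty
      intro v ⟨hv1, hv2⟩
      exact (hdisjranges.le_bot ⟨hTLinl hv1, hv2⟩).elim
    rw [this, Set.empty_union]
  have hcardS2 : S2.ncard = L2 + R2 := by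
    rw [ncard_split S2, hleftS2, hrightS2, hTLcard, hTRcard]
  have hS2valid : IsPBalIndep γ n m' y S2 := by
    refine ⟨isIndepSet_mono hS2S1 hindep1, ?_,
      inBlocks_mono (hS2S1.trans hS1sub) hS.2.2.1,
      onePerBlock_mono (hS2S1.trans hS1sub) hS.2.2.2⟩
    unfold IsBalanced
    rw [hleftS2, hTLcard, hcardS2, Nat.cast_add]
    exact hbal2
  have hfin : (S2.ncard : ℝ) ≤ (betaFn γ n m' y : ℝ) := by
    exact_mod_cast le_betaFn γ n m' y S2 hS2valid
  have hsz : (betaFn γ n m' x : ℝ) = (L : ℝ) + R := by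
    rw [← hcard, ncard_split S, Nat.cast_add]
  rw [hsz]
  have hc2 : (S2.ncard : ℝ) = (L2 : ℝ) + R2 := by
    rw [hcardS2, Nat.cast_add]
  have hcast1 : (L : ℝ) ≤ (L1 : ℝ) + 1 := by exact_mod_cast hLL1
  have hcast2 : (R : ℝ) ≤ (R1 : ℝ) + 1 := by exact_mod_cast hRR1
  linarith [hfin, hc2 ▸ hfin]


lemma coin_prob {p : ℝ} (h0 : 0 ≤ p) (h1 : p ≤ 1) : IsProbabilityMeasure (coin p) := by
  constructor
  show (ENNReal.ofReal p • Measure.dirac true + ENNReal.ofReal (1 - p) • Measure.dirac false)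
    Set.univ = 1
  rw [Measure.add_apply, Measure.smul_apply, Measure.smul_apply,
    Measure.dirac_apply_of_mem (Set.mem_univ _), Measure.dirac_apply_of_mem (Set.mem_univ _)]
  simp only [smul_eq_mul, mul_one]
  rw [← ENNReal.ofReal_add h0 (by linarith)]
  norm_num

/-- concentration of `β` around its mean `β̄` via Azuma's inequality:
`P[|β − β̄| ≥ t] ≤ 2·exp(−t²/(4·n′·(1+1/γ)²))`, and in particular, whenever
`n′ ≤ n·(log d)²/d`, also `P[|β − β̄| ≥ t] ≤ 2·exp(−t²·d/(4·(1+1/γ)²·(log d)²·n))`. -/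
theorem stmt10 (γ : ℝ) (hγ0 : 0 < γ) (hγ1 : γ ≤ 1 / 2) (n : ℕ) (hn : 1 ≤ n)
    (d : ℝ) (hd : 1 < d) (hdn : d ≤ (n : ℝ)) (hm : 1 ≤ mblock d) :
    ∀ t : ℝ, 0 < t →
      (edgeMeasure n d
          {A | t ≤ |(betaFn γ n (mblock d) A : ℝ) -
            ∫ A', (betaFn γ n (mblock d) A' : ℝ) ∂(edgeMeasure n d)|}
        ≤ ENNReal.ofReal
            (2 * Real.exp (-t ^ 2 / (4 * ((n / mblock d : ℕ) : ℝ) * (1 + 1 / γ) ^ 2)))) ∧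
      (((n / mblock d : ℕ) : ℝ) ≤ n * (Real.log d) ^ 2 / d →
        edgeMeasure n d
            {A | t ≤ |(betaFn γ n (mblock d) A : ℝ) -
              ∫ A', (betaFn γ n (mblock d) A' : ℝ) ∂(edgeMeasure n d)|}
          ≤ ENNReal.ofReal
              (2 * Real.exp (-t ^ 2 * d /
                (4 * (1 + 1 / γ) ^ 2 * (Real.log d) ^ 2 * n))))  := by
  intro t ht
  set m' := mblock d with hm'def
  set N := n / m' with hNdef
  have hEM : edgeMeasure n d = (Measure.pi fun _ : Fin (n * n) => coin (d / n)) := rfl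
  have hdn0 : (0:ℝ) < n := by exact_mod_cast hn
  have hd0 : (0:ℝ) < d := by linarith
  haveI : IsProbabilityMeasure (coin (d / n)) :=
    coin_prob (by positivity) (by rw [div_le_one hdn0]; exact hdn)
  rcases Nat.eq_zero_or_pos N with hN0 | hNpos
  · -- degenerate case : no blocks, β ≡ 0
    have hβ : ∀ A : Fin (n * n) → Bool, betaFn γ n m' A = 0 := by
      intro A
      unfold betaFn
      have hset : {k | ∃ S : Set (Vtx n), IsPBalIndep γ n m' A S ∧ S.ncard = k} = {0} := by
        apply Set.eq_singleton_iff_unique_mem.mpr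
        constructor
        · exact ⟨∅, empty_isPBalIndep γ n m' A, by simp⟩
        · rintro k ⟨S, hS, rfl⟩
          have hSempty : S = ∅ := by
            ext v
            simp only [Set.mem_empty_iff_false, iff_false]
            intro hv
            have h1 := hS.2.2.1 v hv
            have h2 : n / m' = 0 := by omega
            rw [h2] at h1
            omega
          rw [hSempty]
          simp
      rw [hset, csSup_singleton]
    have hint : ∫ A', (betaFn γ n m' A' : ℝ) ∂(edgeMeasure n d) = 0 := by
      have heq : (fun A' : Fin (n * n) → Bool => (betaFn γ n m' A' : ℝ)) = fun _ => (0:ℝ) := by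
        funext A'
        rw [hβ A']
        simp
      rw [heq, integral_zero]
    have hsetempty : {A : Fin (n * n) → Bool |
        t ≤ |(betaFn γ n m' A : ℝ) - ∫ A', (betaFn γ n m' A' : ℝ) ∂(edgeMeasure n d)|} = ∅ := by
      ext A
      simp only [Set.mem_setOf_eq, Set.mem_empty_iff_false, iff_false, not_le]
      rw [hint, hβ A]
      simpa using ht
    constructor
    · rw [hsetempty]
      simp
    · intro _
      rw [hsetempty]
      simp
  · -- main case
    have hu : 2 ≤ 1 / γ := by rw [le_div_iff₀ hγ0]; linarith
    have hu0 : 0 < 1 / γ := by positivity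
    have hc : (0:ℝ) < 2 + 1 / γ := by positivity
    have hq0 : (0:ℝ) < 1 + 1 / γ := by positivity
    have hgb : ∀ e : Fin (n * n), egroupN n m' e < N := by
      intro e
      unfold egroupN
      omega
    set g : Fin (n * n) → Fin N := fun e => ⟨egroupN n m' e, hgb e⟩ with hgdef
    have hLip : ∀ (k : Fin N) (x y : Fin (n * n) → Bool),
        (∀ e, g e ≠ k → x e = y e) →
        |(fun A => (betaFn γ n m' A : ℝ)) x - (fun A => (betaFn γ n m' A : ℝ)) y| ≤ 2 + 1 / γ := by
      intro k x y hagree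
      simp only
      have hxy : ∀ e, egroupN n m' e ≠ (k : ℕ) → x e = y e := by
        intro e he
        apply hagree
        intro hgk
        exact he (by rw [← hgk])
      have h1 := beta_diff γ hγ0 hγ1 n m' hm (k : ℕ) x y hxy
      have hxy' : ∀ e, egroupN n m' e ≠ (k : ℕ) → y e = x e := fun e he => (hxy e he).symm
      have h2 := beta_diff γ hγ0 hγ1 n m' hm (k : ℕ) y x hxy'
      rw [abs_le]
      constructor <;> linarith
    have htail := mcdiarmid_tail_two (Fin (n * n)) (coin (d / n)) N g
      (fun A => (betaFn γ n m' A : ℝ)) (2 + 1 / γ) hc hNpos hLip t ht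
    rw [← hEM] at htail
    have hN1 : (1:ℝ) ≤ (N : ℝ) := by exact_mod_cast hNpos
    have hcsq : (2 + 1 / γ) ^ 2 ≤ 2 * (1 + 1 / γ) ^ 2 := by nlinarith
    constructor
    · refine htail.trans (ENNReal.ofReal_le_ofReal ?_)
      apply mul_le_mul_of_nonneg_left _ (by norm_num)
      apply Real.exp_le_exp.2
      rw [neg_div, neg_div, neg_le_neg_iff]
      rw [div_le_div_iff₀ (by positivity) (by positivity)]
      nlinarith [mul_le_mul_of_nonneg_left hcsq
        (mul_nonneg (sq_nonneg t) (by positivity : (0:ℝ) ≤ 2 * (N:ℝ)))]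
    · intro hcond
      have hlog : 0 < Real.log d := Real.log_pos hd
      have hNd : (N : ℝ) * d ≤ (n : ℝ) * (Real.log d) ^ 2 := by
        have h := mul_le_mul_of_nonneg_right hcond hd0.le
        rwa [div_mul_cancel₀ _ (ne_of_gt hd0)] at h
      refine htail.trans (ENNReal.ofReal_le_ofReal ?_)
      apply mul_le_mul_of_nonneg_left _ (by norm_num)
      apply Real.exp_le_exp.2
      rw [neg_div]
      rw [show -t ^ 2 * d / (4 * (1 + 1 / γ) ^ 2 * Real.log d ^ 2 * ↑n)
        = -(t ^ 2 * d / (4 * (1 + 1 / γ) ^ 2 * Real.log d ^ 2 * ↑n)) by ring, neg_le_neg_iff]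
      rw [div_le_div_iff₀ (by positivity) (by positivity)]
      nlinarith [sq_nonneg t, mul_pos hq0 hq0,
        mul_le_mul_of_nonneg_left hNd (mul_nonneg (sq_nonneg t) (by positivity : (0:ℝ) ≤ 2 * (2 + 1 / γ) ^ 2)),
        mul_le_mul_of_nonneg_left hcsq (mul_nonneg (sq_nonneg t) (mul_nonneg (by positivity : (0:ℝ) ≤ (N:ℝ)*d) (by norm_num : (0:ℝ) ≤ 2)))]
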